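/- HXPath= is not compact over the class of tree models: there exists a set Γ of HXPath= node expressions such that every finite subset of Γ is satisfiable in some pointed tree model, but Γ itself is not satisfiable in any pointed tree model. -/

import Mathlib

mutual
inductive PExp (P N M E : Type) : Type
  | mod : M → PExp P N M E
  | at_ : N → PExp P N M E
  | test : NExp P N M E → PExp P N M E
  | comp : PExp P N M E → PExp P N M E → PExp P N M E
inductive NExp (P N M E : Type) : Type
  | prop : P → NExp P N M E
  | nom : N → NExp P N M E
  | neg : NExp P N M E → NExp P N M E
  | conj : NExp P N M E → NExp P N M E → NExp P N M E
  | cmpEq : E → PExp P N M E → PExp P N M E → NExp P N M E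
  | cmpNeq : E → PExp P N M E → PExp P N M E → NExp P N M E
end

/-- An abstract hybrid data model (the requirement that each `sim e` is an
equivalence relation is stated as a separate hypothesis where needed). -/
structure Model (P N M E : Type) where
  W : Type
  sim : E → W → W → Prop
  R : M → W → W → Prop
  V : W → P → Prop
  nom : N → W

mutual
def psat {P N M E : Type} (𝔐 : Model P N M E) : PExp P N M E → 𝔐.W → 𝔐.W → Prop
  | .mod a, m, n => 𝔐.R a m n
  | .at_ i, _, n => 𝔐.nom i = n
  | .test φ, m, n => m = n ∧ nsat 𝔐 φ m
  | .comp α β, m, n => ∃ l, psat 𝔐 α m l ∧ psat 𝔐 β l n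
def nsat {P N M E : Type} (𝔐 : Model P N M E) : NExp P N M E → 𝔐.W → Prop
  | .prop p, m => 𝔐.V m p
  | .nom i, m => 𝔐.nom i = m
  | .neg φ, m => ¬ nsat 𝔐 φ m
  | .conj φ ψ, m => nsat 𝔐 φ m ∧ nsat 𝔐 ψ m
  | .cmpEq e α β, m => ∃ n l, psat 𝔐 α m n ∧ psat 𝔐 β m l ∧ 𝔐.sim e n l
  | .cmpNeq e α β, m => ∃ n l, psat 𝔐 α m n ∧ psat 𝔐 β m l ∧ ¬ 𝔐.sim e n l
end

variable {P N M E : Type}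

/-- `⊤` defined from a given node expression: `¬(φ ∧ ¬φ)`. -/
def NExp.top (φ : NExp P N M E) : NExp P N M E := .neg (.conj φ (.neg φ))
/-- `ε := [⊤]`. -/
def PExp.eps (φ : NExp P N M E) : PExp P N M E := .test (NExp.top φ)
/-- `⟨α⟩φ := ⟨α[φ] =_e α[φ]⟩`. -/
def NExp.dia (e : E) (α : PExp P N M E) (φ : NExp P N M E) : NExp P N M E :=
  .cmpEq e (α.comp (.test φ)) (α.comp (.test φ))
/-- `[α]φ := ¬⟨α⟩¬φ`. -/
def NExp.box (e : E) (α : PExp P N M E) (φ : NExp P N M E) : NExp P N M E :=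
  .neg (NExp.dia e α (.neg φ))
/-- `@_i φ := ⟨@_i⟩φ`. -/
def NExp.atf (e : E) (i : N) (φ : NExp P N M E) : NExp P N M E := NExp.dia e (.at_ i) φ
def NExp.impl (φ ψ : NExp P N M E) : NExp P N M E := .neg (.conj φ (.neg ψ))
def NExp.iffN (φ ψ : NExp P N M E) : NExp P N M E := .conj (φ.impl ψ) (ψ.impl φ)

/-- A (pointed-free) tree model: mono-modal abstract hybrid data model whose
accessibility relation forms a tree (unique root without predecessors, every node
reachable from the root, unique predecessors, no cycles). -/
def IsTree (𝔐 : Model P N Unit Unit) : Prop :=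
  (∀ e, Equivalence (𝔐.sim e)) ∧
  ∃ r : 𝔐.W,
    (∀ x, ¬ 𝔐.R () x r) ∧
    (∀ x, (∀ y, ¬ 𝔐.R () y x) → x = r) ∧
    (∀ n, Relation.ReflTransGen (𝔐.R ()) r n) ∧
    (∀ n l l', 𝔐.R () l n → 𝔐.R () l' n → l = l') ∧
    (∀ n, ¬ Relation.TransGen (𝔐.R ()) n n)

/-- The formula `@_{n+1} ⟨a⟩ (nom n)`. -/
def phiChain (n : ℕ) : NExp ℕ ℕ Unit Unit :=
  NExp.atf () (n + 1) (NExp.dia () (.mod ()) (.nom n))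

lemma phiChain_inj : Function.Injective phiChain := by
  intro a b h
  simp only [phiChain, NExp.atf, NExp.dia, NExp.cmpEq.injEq, PExp.comp.injEq,
    PExp.at_.injEq] at h
  omega

lemma nsat_phiChain (𝔐 : Model ℕ ℕ Unit Unit) (hsim : Equivalence (𝔐.sim ()))
    (n : ℕ) (m : 𝔐.W) :
    nsat 𝔐 (phiChain n) m ↔ 𝔐.R () (𝔐.nom (n + 1)) (𝔐.nom n) := by
  simp only [phiChain, NExp.atf, NExp.dia, nsat, psat]
  constructor
  · rintro ⟨a, b, ⟨l, hl, rfl, c, d, ⟨u, hR, rfl, hu⟩, -, -⟩, -, -⟩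
    subst hl; subst hu; exact hR
  · intro h
    refine ⟨𝔐.nom (n+1), 𝔐.nom (n+1),
      ⟨𝔐.nom (n+1), rfl, rfl, 𝔐.nom n, 𝔐.nom n,
        ⟨𝔐.nom n, h, rfl, rfl⟩, ⟨𝔐.nom n, h, rfl, rfl⟩, hsim.refl _⟩,
      ⟨𝔐.nom (n+1), rfl, rfl, 𝔐.nom n, 𝔐.nom n,
        ⟨𝔐.nom n, h, rfl, rfl⟩, ⟨𝔐.nom n, h, rfl, rfl⟩, hsim.refl _⟩,
      hsim.refl _⟩

/-- In a tree there is no infinite descending chain `… → x 1 → x 0`. -/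
lemma no_descending_chain {W : Type} (R : W → W → Prop) (r : W)
    (hroot : ∀ x, ¬ R x r)
    (hreach : ∀ n, Relation.ReflTransGen R r n)
    (huniq : ∀ n l l', R l n → R l' n → l = l')
    (x : ℕ → W) (hx : ∀ n, R (x (n + 1)) (x n)) : False := by
  have key : ∀ z, Relation.ReflTransGen R r z → ∀ k, z ≠ x k := by
    intro z hz
    induction hz with
    | refl =>
      intro k hk
      exact hroot (x (k + 1)) (hk ▸ hx k)
    | tail hab hbc ih =>
      intro k hk
      subst hk
      exact ih (k + 1) (huniq _ _ _ hbc (hx k))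
  exact key (x 0) (hreach (x 0)) 0 rfl

/-- The chain model used for finite satisfiability. -/
def chainModel (K : ℕ) : Model ℕ ℕ Unit Unit where
  W := ℕ
  sim := fun _ => Eq
  R := fun _ m n => n = m + 1
  V := fun _ _ => False
  nom := fun i => K + 1 - i

lemma chainModel_isTree (K : ℕ) : IsTree (chainModel K) := by
  constructor
  · exact fun _ => eq_equivalence
  · show ∃ r : ℕ,
      (∀ x : ℕ, ¬ (r = x + 1)) ∧
      (∀ x : ℕ, (∀ y : ℕ, ¬ (x = y + 1)) → x = r) ∧
      (∀ n : ℕ, Relation.ReflTransGen (fun m n : ℕ => n = m + 1) r n) ∧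
      (∀ n l l' : ℕ, n = l + 1 → n = l' + 1 → l = l') ∧
      (∀ n : ℕ, ¬ Relation.TransGen (fun m n : ℕ => n = m + 1) n n)
    refine ⟨0, fun x h => by omega, ?_, ?_, fun n l l' h h' => by omega, ?_⟩
    · intro x h
      cases x with
      | zero => rfl
      | succ m => exact ((h m) rfl).elim
    · intro n
      induction n with
      | zero => exact .refl
      | succ m ih => exact ih.tail rfl
    · intro n h
      have key : ∀ a b : ℕ, Relation.TransGen (fun m n : ℕ => n = m + 1) a b → a < b := by
        intro a b hab
        induction hab with
        | single h => omega
        | tail _ h ih => omega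
      exact absurd (key n n h) (lt_irrefl n)

/-- HXPath= is not compact over the class of tree models: there is a set of node
expressions every finite subset of which is satisfiable in a pointed tree model,
while the whole set is not. -/
theorem hxpath_not_compact_over_trees :
    ∃ Γ : Set (NExp ℕ ℕ Unit Unit),
      (∀ Γ' ⊆ Γ, Γ'.Finite →
        ∃ (𝔐 : Model ℕ ℕ Unit Unit) (m : 𝔐.W), IsTree 𝔐 ∧ ∀ φ ∈ Γ', nsat 𝔐 φ m) ∧
      ¬ ∃ (𝔐 : Model ℕ ℕ Unit Unit) (m : 𝔐.W), IsTree 𝔐 ∧ ∀ φ ∈ Γ, nsat 𝔐 φ m := by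
  refine ⟨Set.range phiChain, ?_, ?_⟩
  · intro Γ' hsub hfin
    have hSfin : (phiChain ⁻¹' Γ').Finite :=
      hfin.preimage (phiChain_inj.injOn)
    obtain ⟨K, hK⟩ := hSfin.bddAbove
    refine ⟨chainModel K, (0 : ℕ), chainModel_isTree K, ?_⟩
    intro φ hφ
    obtain ⟨n, rfl⟩ := hsub hφ
    have hn : n ≤ K := hK hφ
    refine (nsat_phiChain (chainModel K) eq_equivalence n _).mpr ?_
    show K + 1 - n = (K + 1 - (n + 1)) + 1
    omega
  · rintro ⟨𝔐, m, ⟨hsim, r, hroot, -, hreach, huniq, -⟩, hsat⟩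
    refine no_descending_chain (𝔐.R ()) r hroot hreach huniq (fun n => 𝔐.nom n)
      (fun n => ?_)
    exact (nsat_phiChain 𝔐 (hsim ()) n m).mp (hsat _ ⟨n, rfl⟩)
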